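/- Let k ≥ 2 be an integer, let ℱ be a family of subsets of {1,…,n}, let F ∈ ℱ and let 1 ≤ ℓ < k. Then c_ℓ(F) ≤ c_k(F) + 4^k. -/

import Mathlib

open Finset

/-- A `k`-chain: `k` distinct sets totally ordered by strict inclusion. -/
def IsKChain {n : ℕ} (k : ℕ) (𝒞 : Finset (Finset (Fin n))) : Prop :=
  𝒞.card = k ∧ IsChain (· ⊂ ·) (𝒞 : Set (Finset (Fin n)))

/-- A family contains no `k`-chain. -/
def NoKChain {n : ℕ} (k : ℕ) (𝒜 : Finset (Finset (Fin n))) : Prop :=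
  ∀ 𝒞 ⊆ 𝒜, ¬ IsKChain k 𝒞

/-- The weight of a chain tuple `F₁ ⊋ F₂ ⊋ ⋯ ⊋ F_ℓ`: the product
`C(|F₁|,|F₂|)⁻¹ ⋯ C(|F_{ℓ-1}|,|F_ℓ|)⁻¹` of reciprocals of consecutive binomial coefficients. -/
noncomputable def chainWeight {n ℓ : ℕ} (G : Fin ℓ → Finset (Fin n)) : ℝ :=
  ∏ i : Fin ℓ, if h : (i : ℕ) + 1 < ℓ then
    (((G i).card.choose (G ⟨(i : ℕ) + 1, h⟩).card : ℕ) : ℝ)⁻¹ else 1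

open scoped Classical in
/-- The `ℓ`-chain density of `F₁` with respect to the family `𝓕`: the sum of `chainWeight`
over all chains `F₁ ⊋ F₂ ⊋ ⋯ ⊋ F_ℓ` with `F₂, …, F_ℓ ∈ 𝓕`.  In particular the `1`-chain
density is always `1`. -/
noncomputable def chainDensity {n : ℕ} (𝓕 : Finset (Finset (Fin n))) (ℓ : ℕ)
    (F₁ : Finset (Fin n)) : ℝ :=
  ∑ G : Fin ℓ → Finset (Fin n),
    if (∀ h : 0 < ℓ, G ⟨0, h⟩ = F₁) ∧ (∀ i : Fin ℓ, (i : ℕ) ≠ 0 → G i ∈ 𝓕) ∧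
        (∀ i j : Fin ℓ, i < j → G j ⊂ G i)
      then chainWeight G else 0

namespace Statement12Aux

open scoped Classical

variable {n : ℕ}

/-- The initial segment of length `m` of the maximal chain associated to a permutation. -/
def initSeg (σ : Equiv.Perm (Fin n)) (m : ℕ) : Finset (Fin n) :=
  Finset.univ.filter (fun x => ((σ.symm x : Fin n) : ℕ) < m)

/-- A set lies on the maximal chain of `σ`. -/
def onChain (σ : Equiv.Perm (Fin n)) (G : Finset (Fin n)) : Prop :=
  initSeg σ G.card = G

lemma mem_initSeg {σ : Equiv.Perm (Fin n)} {m : ℕ} {x : Fin n} :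
    x ∈ initSeg σ m ↔ ((σ.symm x : Fin n) : ℕ) < m := by
  simp [initSeg]

lemma initSeg_mono {σ : Equiv.Perm (Fin n)} {m m' : ℕ} (h : m ≤ m') :
    initSeg σ m ⊆ initSeg σ m' := by
  intro x hx
  rw [mem_initSeg] at hx ⊢
  omega

lemma card_filter_val_lt {m : ℕ} (hm : m ≤ n) :
    ((Finset.univ : Finset (Fin n)).filter (fun y : Fin n => (y : ℕ) < m)).card = m := by
  have : ((Finset.univ : Finset (Fin n)).filter (fun y : Fin n => (y : ℕ) < m)).map Fin.valEmbedding
      = Finset.range m := by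
    ext y
    simp only [Finset.mem_map, Finset.mem_filter, Finset.mem_univ, true_and,
      Fin.valEmbedding_apply, Finset.mem_range]
    constructor
    · rintro ⟨x, hx, rfl⟩; exact hx
    · intro hy; exact ⟨⟨y, lt_of_lt_of_le hy hm⟩, hy, rfl⟩
  have := congrArg Finset.card this
  simpa using this

lemma initSeg_eq_image (σ : Equiv.Perm (Fin n)) (m : ℕ) :
    initSeg σ m = ((Finset.univ : Finset (Fin n)).filter (fun y : Fin n => (y : ℕ) < m)).image σ := by
  ext x
  simp only [mem_initSeg, Finset.mem_image, Finset.mem_filter, Finset.mem_univ, true_and]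
  constructor
  · intro h; exact ⟨σ.symm x, h, by simp⟩
  · rintro ⟨y, hy, rfl⟩; simpa using hy

lemma card_initSeg (σ : Equiv.Perm (Fin n)) {m : ℕ} (hm : m ≤ n) :
    (initSeg σ m).card = m := by
  rw [initSeg_eq_image, Finset.card_image_of_injective _ σ.injective, card_filter_val_lt hm]

lemma onChain_subset {σ : Equiv.Perm (Fin n)} {G H : Finset (Fin n)}
    (hG : onChain σ G) (hH : onChain σ H) (h : G.card ≤ H.card) : G ⊆ H := by
  rw [← hG, ← hH]; exact initSeg_mono h

lemma onChain_eq {σ : Equiv.Perm (Fin n)} {G H : Finset (Fin n)}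
    (hG : onChain σ G) (hH : onChain σ H) (h : G.card = H.card) : G = H := by
  rw [← hG, ← hH, h]

/-- Number of permutations whose chain passes through all sets of a tuple. -/
noncomputable def cnt {ℓ : ℕ} (G : Fin ℓ → Finset (Fin n)) : ℕ :=
  (Finset.univ.filter (fun σ : Equiv.Perm (Fin n) => ∀ i, onChain σ (G i))).card

lemma initSeg_mul (τ σ : Equiv.Perm (Fin n)) (m : ℕ) :
    initSeg (τ * σ) m = (initSeg σ m).image τ := by
  ext x
  have key : (τ * σ).symm x = σ.symm (τ.symm x) := rfl
  simp only [mem_initSeg, Finset.mem_image, key]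
  constructor
  · intro h
    exact ⟨τ.symm x, by simpa using h, by simp⟩
  · rintro ⟨y, hy, rfl⟩
    simpa using hy

lemma onChain_mul {τ σ : Equiv.Perm (Fin n)} {X : Finset (Fin n)} :
    onChain (τ * σ) (X.image τ) ↔ onChain σ X := by
  unfold onChain
  rw [Finset.card_image_of_injective _ τ.injective, initSeg_mul]
  exact ⟨fun h => Finset.image_injective τ.injective h, fun h => by rw [h]⟩

/-- Invariance of the count under relabelling by a permutation. -/
lemma cnt_image (τ : Equiv.Perm (Fin n)) {ℓ : ℕ} (G : Fin ℓ → Finset (Fin n)) :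
    cnt (fun i => (G i).image τ) = cnt G := by
  unfold cnt
  apply Finset.card_nbij' (i := fun σ => τ⁻¹ * σ) (j := fun σ => τ * σ)
  · intro σ hσ
    simp only [Finset.mem_coe, Finset.mem_filter, Finset.mem_univ, true_and] at hσ ⊢
    intro i
    have h := (onChain_mul (τ := τ⁻¹) (σ := σ) (X := (G i).image τ)).mpr (hσ i)
    have himg : ((G i).image τ).image (τ⁻¹ : Equiv.Perm (Fin n)) = G i := by
      rw [Finset.image_image]
      have : ((τ⁻¹ : Equiv.Perm (Fin n)) : Fin n → Fin n) ∘ τ = id := by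
        funext x; simp
      rw [this, Finset.image_id]
    rwa [himg] at h
  · intro σ hσ
    simp only [Finset.mem_coe, Finset.mem_filter, Finset.mem_univ, true_and] at hσ ⊢
    intro i
    exact (onChain_mul (τ := τ) (σ := σ)).mpr (hσ i)
  · intro σ _; simp [mul_assoc]
  · intro σ _; simp [← mul_assoc]

lemma image_swap_of_mem {S : Finset (Fin n)} {a b : Fin n} (ha : a ∈ S) (hb : b ∈ S) :
    S.image (Equiv.swap a b) = S := by
  ext x
  rw [Finset.mem_image]
  constructor
  · rintro ⟨y, hy, rfl⟩
    rcases eq_or_ne y a with rfl | hya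
    · simpa [Equiv.swap_apply_left] using hb
    rcases eq_or_ne y b with rfl | hyb
    · simpa [Equiv.swap_apply_right] using ha
    · rwa [Equiv.swap_apply_of_ne_of_ne hya hyb]
  · intro hx
    exact ⟨Equiv.swap a b x, by
      rcases eq_or_ne x a with rfl | hxa
      · simpa [Equiv.swap_apply_left] using hb
      rcases eq_or_ne x b with rfl | hxb
      · simpa [Equiv.swap_apply_right] using ha
      · rwa [Equiv.swap_apply_of_ne_of_ne hxa hxb], by simp⟩

lemma image_swap_of_mem_not_mem {B : Finset (Fin n)} {a b : Fin n} (ha : a ∈ B) (hb : b ∉ B) :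
    B.image (Equiv.swap a b) = insert b (B.erase a) := by
  have hab : a ≠ b := fun h => hb (h ▸ ha)
  ext x
  rw [Finset.mem_image]
  simp only [Finset.mem_insert, Finset.mem_erase]
  constructor
  · rintro ⟨y, hy, rfl⟩
    rcases eq_or_ne y a with rfl | hya
    · left; exact Equiv.swap_apply_left _ _
    rcases eq_or_ne y b with rfl | hyb
    · exact absurd hy hb
    · rw [Equiv.swap_apply_of_ne_of_ne hya hyb]; exact Or.inr ⟨hya, hy⟩
  · rintro (rfl | ⟨hxa, hxB⟩)
    · exact ⟨a, ha, Equiv.swap_apply_left _ _⟩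
    · refine ⟨x, hxB, ?_⟩
      rcases eq_or_ne x b with rfl | hxb
      · exact absurd hxB hb
      · exact Equiv.swap_apply_of_ne_of_ne hxa hxb

/-- Counts only depend on the cardinality of the appended bottom set. -/
lemma cnt_snoc_congr {ℓ : ℕ} (G : Fin ℓ → Finset (Fin n)) (A : Finset (Fin n))
    (hGA : ∀ i, A ⊆ G i) :
    ∀ N B B', (B \ B').card ≤ N → B ⊆ A → B' ⊆ A → B.card = B'.card →
      cnt (Fin.snoc G B) = cnt (Fin.snoc G B') := by
  intro N
  induction N with
  | zero =>
    intro B B' hle hB hB' hcard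
    have h1 : B \ B' = ∅ := Finset.card_eq_zero.mp (Nat.le_antisymm hle (Nat.zero_le _))
    have hBB' : B ⊆ B' := Finset.sdiff_eq_empty_iff_subset.mp h1
    rw [Finset.eq_of_subset_of_card_le hBB' (le_of_eq hcard.symm)]
  | succ N ih =>
    intro B B' hle hB hB' hcard
    rcases eq_or_ne B B' with rfl | hne
    · rfl
    have hBBne : (B \ B').Nonempty := by
      rw [Finset.sdiff_nonempty]
      intro hsub
      exact hne (Finset.eq_of_subset_of_card_le hsub (le_of_eq hcard.symm))
    have hB'Bne : (B' \ B).Nonempty := by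
      rw [Finset.sdiff_nonempty]
      intro hsub
      exact hne ((Finset.eq_of_subset_of_card_le hsub (le_of_eq hcard)).symm)
    obtain ⟨a, ha⟩ := hBBne
    obtain ⟨b, hb⟩ := hB'Bne
    rw [Finset.mem_sdiff] at ha hb
    have haA : a ∈ A := hB ha.1
    have hbA : b ∈ A := hB' hb.1
    set τ := Equiv.swap a b with hτ
    set B'' := insert b (B.erase a) with hB''
    -- step 1 : cnt (snoc G B) = cnt (snoc G B'')
    have himg : (fun i => ((Fin.snoc G B : Fin (ℓ+1) → Finset (Fin n)) i).image τ)
        = Fin.snoc G B'' := by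
      have hcomp := Fin.comp_snoc (fun S : Finset (Fin n) => S.image τ) G B
      have hGs : (fun S : Finset (Fin n) => S.image τ) ∘ G = G := by
        funext i
        exact image_swap_of_mem (hGA i haA) (hGA i hbA)
      have hBs : B.image τ = B'' := image_swap_of_mem_not_mem ha.1 hb.2
      calc (fun i => ((Fin.snoc G B : Fin (ℓ+1) → Finset (Fin n)) i).image τ)
          = (fun S : Finset (Fin n) => S.image τ) ∘ Fin.snoc G B := rfl
        _ = Fin.snoc ((fun S : Finset (Fin n) => S.image τ) ∘ G) (B.image τ) := hcomp
        _ = Fin.snoc G B'' := by rw [hGs, hBs]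
    have step1 : cnt (Fin.snoc G B) = cnt (Fin.snoc G B'') := by
      rw [← cnt_image τ (Fin.snoc G B), himg]
    rw [step1]
    -- step 2 : apply the induction hypothesis to B'' and B'
    have hbB'' : b ∉ B.erase a := fun h => hb.2 (Finset.mem_of_mem_erase h)
    have hcardBB : B''.card = B'.card := by
      rw [hB'', Finset.card_insert_of_notMem hbB'', Finset.card_erase_of_mem ha.1]
      have : 1 ≤ B.card := Finset.card_pos.mpr ⟨a, ha.1⟩
      omega
    have hsub'' : B'' ⊆ A := Finset.insert_subset hbA ((Finset.erase_subset _ _).trans hB)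
    have hsd : B'' \ B' = (B \ B').erase a := by
      rw [hB'', Finset.insert_sdiff_of_mem _ hb.1]
      ext x
      simp only [Finset.mem_sdiff, Finset.mem_erase]
      tauto
    have hmeas : (B'' \ B').card ≤ N := by
      rw [hsd, Finset.card_erase_of_mem (Finset.mem_sdiff.mpr ha)]
      omega
    exact ih B'' B' hmeas hsub'' hB' hcardBB

/-- Partition of the count according to the initial segment of size `g`. -/
lemma cnt_partition {ℓ : ℕ} (G : Fin ℓ → Finset (Fin n)) (A : Finset (Fin n)) (g : ℕ)
    (hg : g ≤ A.card)
    (hon : ∀ σ : Equiv.Perm (Fin n), (∀ i, onChain σ (G i)) → initSeg σ g ⊆ A) :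
    cnt G = ∑ B ∈ A.powersetCard g, cnt (Fin.snoc G B) := by
  have hAn : A.card ≤ n := by
    simpa using Finset.card_le_univ A
  unfold cnt
  rw [Finset.card_eq_sum_card_fiberwise (f := fun σ => initSeg σ g) (t := A.powersetCard g)
    (fun σ hσ => by
      rw [Finset.mem_coe, Finset.mem_filter] at hσ
      rw [Finset.mem_coe, Finset.mem_powersetCard]
      exact ⟨hon σ hσ.2, card_initSeg σ (hg.trans hAn)⟩)]
  apply Finset.sum_congr rfl
  intro B hB
  rw [Finset.mem_powersetCard] at hB
  congr 1
  rw [Finset.filter_filter]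
  apply Finset.filter_congr
  intro σ _
  constructor
  · rintro ⟨h1, h2⟩ i
    refine Fin.lastCases ?_ ?_ i
    · rw [Fin.snoc_last]
      show initSeg σ B.card = B
      rw [hB.2]
      exact h2
    · intro j
      rw [Fin.snoc_castSucc]
      exact h1 j
  · intro h
    refine ⟨fun j => ?_, ?_⟩
    · have hj := h (Fin.castSucc j)
      rwa [Fin.snoc_castSucc] at hj
    · have hl := h (Fin.last ℓ)
      rw [Fin.snoc_last] at hl
      rw [← hB.2]
      exact hl

/-- The key recursion for counts. -/
lemma cnt_snoc {ℓ : ℕ} (G : Fin ℓ → Finset (Fin n)) (A : Finset (Fin n))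
    (hGA : ∀ i, A ⊆ G i) (B : Finset (Fin n)) (hB : B ⊆ A)
    (hon : ∀ σ : Equiv.Perm (Fin n), (∀ i, onChain σ (G i)) → initSeg σ (B.card) ⊆ A) :
    A.card.choose B.card * cnt (Fin.snoc G B) = cnt G := by
  rw [cnt_partition G A B.card (Finset.card_le_card hB) hon]
  have hall : ∀ B' ∈ A.powersetCard B.card, cnt (Fin.snoc G B') = cnt (Fin.snoc G B) := by
    intro B' hB'
    rw [Finset.mem_powersetCard] at hB'
    exact cnt_snoc_congr G A hGA (B' \ B).card B' B le_rfl hB'.1 hB hB'.2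
  rw [Finset.sum_congr rfl hall, Finset.sum_const, Finset.card_powersetCard, smul_eq_mul]


lemma snoc_eval {α : Type*} {m : ℕ} (q : Fin (m + 1) → α) (B : α) (j : ℕ) (hj : j < m + 2) :
    (Fin.snoc q B : Fin (m + 2) → α) ⟨j, hj⟩ = if h : j < m + 1 then q ⟨j, h⟩ else B := by
  split
  · next h =>
    have : (⟨j, hj⟩ : Fin (m + 2)) = Fin.castSucc ⟨j, h⟩ := rfl
    rw [this, Fin.snoc_castSucc]
  · next h =>
    have : (⟨j, hj⟩ : Fin (m + 2)) = Fin.last (m + 1) := by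
      apply Fin.ext
      simp only [Fin.val_last]
      omega
    rw [this, Fin.snoc_last]

lemma chainWeight_snoc {m : ℕ} (q : Fin (m + 1) → Finset (Fin n)) (B : Finset (Fin n)) :
    chainWeight (Fin.snoc q B : Fin (m + 2) → Finset (Fin n))
      = chainWeight q * (((q (Fin.last m)).card.choose B.card : ℕ) : ℝ)⁻¹ := by
  unfold chainWeight
  rw [Fin.prod_univ_castSucc (n := m + 1)]
  have hc1 : ¬(((Fin.last (m + 1) : Fin (m + 2)) : ℕ) + 1 < m + 2) := by simp
  rw [dif_neg hc1, mul_one]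
  rw [Fin.prod_univ_castSucc (n := m)]
  rw [Fin.prod_univ_castSucc (n := m)]
  have hc2 : ¬(((Fin.last m : Fin (m + 1)) : ℕ) + 1 < m + 1) := by simp
  rw [dif_neg hc2, mul_one]
  congr 1
  · -- the first m factors agree
    apply Finset.prod_congr rfl
    intro i _
    have h1 : ((Fin.castSucc (Fin.castSucc i) : Fin (m+2)) : ℕ) + 1 < m + 2 := by
      have := i.isLt; simp only [Fin.coe_castSucc]; omega
    have h2 : ((Fin.castSucc i : Fin (m+1)) : ℕ) + 1 < m + 1 := by
      have := i.isLt; simp only [Fin.coe_castSucc]; omega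
    rw [dif_pos h1, dif_pos h2]
    have e1 : (Fin.snoc q B : Fin (m + 2) → Finset (Fin n)) (Fin.castSucc (Fin.castSucc i))
        = q (Fin.castSucc i) := by rw [Fin.snoc_castSucc]
    have e2 : (Fin.snoc q B : Fin (m + 2) → Finset (Fin n))
          ⟨((Fin.castSucc (Fin.castSucc i) : Fin (m + 2)) : ℕ) + 1, h1⟩
        = q ⟨((Fin.castSucc i : Fin (m + 1)) : ℕ) + 1, h2⟩ := by
      rw [snoc_eval]
      rw [dif_pos (show ((Fin.castSucc (Fin.castSucc i) : Fin (m + 2)) : ℕ) + 1 < m + 1 by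
        simpa using h2)]
      apply congrArg
      apply Fin.ext
      simp
    rw [e1, e2]
  · -- the last factor gives the binomial coefficient
    have h1 : ((Fin.castSucc (Fin.last m) : Fin (m+2)) : ℕ) + 1 < m + 2 := by
      simp
    rw [dif_pos h1]
    have e1 : (Fin.snoc q B : Fin (m + 2) → Finset (Fin n)) (Fin.castSucc (Fin.last m))
        = q (Fin.last m) := by rw [Fin.snoc_castSucc]
    have e2 : (Fin.snoc q B : Fin (m + 2) → Finset (Fin n))
          ⟨((Fin.castSucc (Fin.last m) : Fin (m + 2)) : ℕ) + 1, h1⟩ = B := by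
      rw [snoc_eval]
      rw [dif_neg (show ¬(((Fin.castSucc (Fin.last m) : Fin (m + 2)) : ℕ) + 1 < m + 1) by simp)]
    rw [e1, e2]

/-- The chain condition used in `chainDensity`. -/
def Valid (𝓕 : Finset (Finset (Fin n))) (F : Finset (Fin n)) {ℓ : ℕ}
    (G : Fin ℓ → Finset (Fin n)) : Prop :=
  (∀ h : 0 < ℓ, G ⟨0, h⟩ = F) ∧ (∀ i : Fin ℓ, (i : ℕ) ≠ 0 → G i ∈ 𝓕) ∧
    (∀ i j : Fin ℓ, i < j → G j ⊂ G i)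

lemma chainDensity_eq_sum_valid (𝓕 : Finset (Finset (Fin n))) (ℓ : ℕ) (F : Finset (Fin n)) :
    chainDensity 𝓕 ℓ F = ∑ G : Fin ℓ → Finset (Fin n),
      if Valid 𝓕 F G then chainWeight G else 0 := by
  unfold chainDensity Valid
  apply Finset.sum_congr rfl
  intro G _
  congr 1

/-- The bottom-set recursion hypothesis package: the main per-tuple identity. -/
lemma weight_cnt (𝓕 : Finset (Finset (Fin n))) (F : Finset (Fin n)) :
    ∀ (m : ℕ) (G : Fin (m + 1) → Finset (Fin n)), Valid 𝓕 F G →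
      chainWeight G * (cnt (fun _ : Fin 1 => F) : ℝ) = (cnt G : ℝ) := by
  intro m
  induction m with
  | zero =>
    intro G hG
    have hGF : G = fun _ : Fin 1 => F := by
      funext i
      have hi : i = ⟨0, Nat.one_pos⟩ := Fin.ext (by omega)
      rw [hi]
      exact hG.1 Nat.one_pos
    rw [hGF]
    have : chainWeight (fun _ : Fin 1 => F) = 1 := by
      unfold chainWeight
      rw [Fin.prod_univ_one, dif_neg (by norm_num)]
    rw [this, one_mul]
  | succ m ih =>
    intro G hG
    set Gf : Fin (m + 1) → Finset (Fin n) := Fin.init G with hGf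
    have hinit : ∀ i : Fin (m + 1), Gf i = G (Fin.castSucc i) := fun i => rfl
    have hGsnoc : Fin.snoc Gf (G (Fin.last (m + 1))) = G := Fin.snoc_init_self G
    have hfront : Valid 𝓕 F Gf := by
      refine ⟨fun h => ?_, fun i hi => ?_, fun i j hij => ?_⟩
      · rw [hinit]
        have : Fin.castSucc (⟨0, h⟩ : Fin (m + 1)) = ⟨0, by omega⟩ := rfl
        rw [this]
        exact hG.1 (by omega)
      · rw [hinit]
        exact hG.2.1 _ (by simpa using hi)
      · rw [hinit, hinit]
        exact hG.2.2 _ _ (by simpa using hij)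
    set A : Finset (Fin n) := Gf (Fin.last m) with hA
    set B : Finset (Fin n) := G (Fin.last (m + 1)) with hB
    have hBA : B ⊂ A := by
      rw [hA, hinit]
      exact hG.2.2 _ _ (Fin.castSucc_lt_last _)
    have hGA : ∀ i, A ⊆ Gf i := by
      intro i
      rcases eq_or_lt_of_le (Fin.le_last i) with h | h
      · rw [hA, ← h]
      · exact (hfront.2.2 _ _ h).subset
    have hon : ∀ σ : Equiv.Perm (Fin n), (∀ i, onChain σ (Gf i)) → initSeg σ B.card ⊆ A := by
      intro σ h
      have hlast := h (Fin.last m)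
      calc initSeg σ B.card ⊆ initSeg σ A.card :=
            initSeg_mono (Finset.card_lt_card hBA).le
        _ = A := hlast
    have hcnt := cnt_snoc Gf A hGA B hBA.subset hon
    rw [hGsnoc] at hcnt
    have hch : chainWeight G = chainWeight Gf * ((A.card.choose B.card : ℕ) : ℝ)⁻¹ := by
      conv_lhs => rw [← hGsnoc]
      exact chainWeight_snoc Gf B
    have ihh := ih Gf hfront
    have hcpos : (0 : ℝ) < ((A.card.choose B.card : ℕ) : ℝ) := by
      exact_mod_cast Nat.choose_pos (Finset.card_le_card hBA.subset)
    have hcnt' : ((A.card.choose B.card : ℕ) : ℝ) * (cnt G : ℝ) = (cnt Gf : ℝ) := by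
      exact_mod_cast congrArg (Nat.cast (R := ℝ)) hcnt
    rw [hch, mul_assoc, mul_comm (((A.card.choose B.card : ℕ) : ℝ))⁻¹, ← mul_assoc, ihh]
    rw [← hcnt']
    field_simp

/-- The number of `𝓕`-sets lying strictly below `F` on the chain of `σ`. -/
noncomputable def Zcard (𝓕 : Finset (Finset (Fin n))) (F : Finset (Fin n))
    (σ : Equiv.Perm (Fin n)) : ℕ :=
  (𝓕.filter (fun H => H ⊂ F ∧ onChain σ H)).card

lemma sum_range_choose_eq (z m : ℕ) : ∑ x ∈ Finset.range z, x.choose m = z.choose (m + 1) := by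
  induction z with
  | zero => simp
  | succ z ih =>
    rw [Finset.sum_range_succ, ih, Nat.choose_succ_succ]
    simp only [Nat.succ_eq_add_one]
    omega

/-- Hockey stick over the sets of `𝓕` lying on the chain of `σ` below `F`. -/
lemma hockey (𝓕 : Finset (Finset (Fin n))) (F : Finset (Fin n)) (σ : Equiv.Perm (Fin n))
    (m : ℕ) :
    ∑ H ∈ 𝓕.filter (fun H => H ⊂ F ∧ onChain σ H), (Zcard 𝓕 H σ).choose m
      = (Zcard 𝓕 F σ).choose (m + 1) := by
  set T := 𝓕.filter (fun H => H ⊂ F ∧ onChain σ H) with hT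
  have hmemT : ∀ {H}, H ∈ T ↔ H ∈ 𝓕 ∧ H ⊂ F ∧ onChain σ H := by
    intro H; rw [hT, Finset.mem_filter]
  set r : Finset (Fin n) → ℕ := fun H => (T.filter (fun H' => H' ⊂ H)).card with hr
  have hZr : ∀ H ∈ T, Zcard 𝓕 H σ = r H := by
    intro H hH
    rw [hmemT] at hH
    unfold Zcard
    congr 1
    ext H'
    rw [Finset.mem_filter, Finset.mem_filter, hmemT]
    constructor
    · rintro ⟨h1, h2, h3⟩
      exact ⟨⟨h1, h2.trans hH.2.1, h3⟩, h2⟩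
    · rintro ⟨⟨h1, _, h3⟩, h4⟩
      exact ⟨h1, h4, h3⟩
  rw [Finset.sum_congr rfl (fun H hH => by rw [hZr H hH])]
  -- r is injective on T with image `range T.card`
  have hcomp : ∀ {H H'}, H ∈ T → H' ∈ T → H ≠ H' → H ⊂ H' ∨ H' ⊂ H := by
    intro H H' hH hH' hne
    rw [hmemT] at hH hH'
    rcases le_or_gt H.card H'.card with h | h
    · left
      exact (onChain_subset hH.2.2 hH'.2.2 h).ssubset_of_ne hne
    · right
      exact (onChain_subset hH'.2.2 hH.2.2 h.le).ssubset_of_ne (Ne.symm hne)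
  have hmono : ∀ {H H'}, H ∈ T → H' ∈ T → H ⊂ H' → r H < r H' := by
    intro H H' hH hH' hss
    apply Finset.card_lt_card
    constructor
    · intro x hx
      rw [Finset.mem_filter] at hx ⊢
      exact ⟨hx.1, hx.2.trans hss⟩
    · intro hsub
      have : H ∈ T.filter (fun H' => H' ⊂ H) := hsub (by
        rw [Finset.mem_filter]; exact ⟨hH, hss⟩)
      rw [Finset.mem_filter] at this
      exact ssubset_irrefl H this.2
  have hinj : Set.InjOn r T := by
    intro H hH H' hH' heq
    by_contra hne
    rcases hcomp hH hH' hne with h | h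
    · exact absurd heq (Nat.ne_of_lt (hmono hH hH' h))
    · exact absurd heq.symm (Nat.ne_of_lt (hmono hH' hH h))
  have himg : T.image r = Finset.range T.card := by
    apply Finset.eq_of_subset_of_card_le
    · intro x hx
      rw [Finset.mem_image] at hx
      obtain ⟨H, hH, rfl⟩ := hx
      rw [Finset.mem_range]
      have : T.filter (fun H' => H' ⊂ H) ⊆ T.erase H := by
        intro y hy
        rw [Finset.mem_filter] at hy
        rw [Finset.mem_erase]
        exact ⟨fun h => ssubset_irrefl H (h ▸ hy.2), hy.1⟩
      calc r H ≤ (T.erase H).card := Finset.card_le_card this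
        _ < T.card := by
            rw [Finset.card_erase_of_mem hH]
            have : 1 ≤ T.card := Finset.card_pos.mpr ⟨H, hH⟩
            omega
    · rw [Finset.card_range, Finset.card_image_of_injOn hinj]
  rw [← Finset.sum_image (f := fun x => x.choose m) (g := r) (fun x hx y hy h => hinj hx hy h)]
  rw [himg, sum_range_choose_eq]
  congr 1

/-- The per-permutation tuple count. -/
lemma tuple_count (𝓕 : Finset (Finset (Fin n))) (σ : Equiv.Perm (Fin n)) :
    ∀ (m : ℕ) (F : Finset (Fin n)), onChain σ F →
      (Finset.univ.filter (fun G : Fin (m + 1) → Finset (Fin n) =>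
        Valid 𝓕 F G ∧ ∀ i, onChain σ (G i))).card = (Zcard 𝓕 F σ).choose m := by
  intro m
  induction m with
  | zero =>
    intro F hF
    rw [Nat.choose_zero_right, Finset.card_eq_one]
    refine ⟨fun _ => F, ?_⟩
    ext G
    rw [Finset.mem_filter, Finset.mem_singleton]
    constructor
    · rintro ⟨_, ⟨h1, _, _⟩, _⟩
      funext i
      have hi : i = ⟨0, Nat.one_pos⟩ := Fin.ext (by have := i.isLt; omega)
      rw [hi]
      exact h1 Nat.one_pos
    · rintro rfl
      refine ⟨Finset.mem_univ _, ⟨fun _ => rfl, fun i hi => absurd ?_ hi,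
        fun i j hij => absurd hij ?_⟩, fun _ => hF⟩
      · have := i.isLt; omega
      · rw [Fin.lt_def]
        have := i.isLt
        have := j.isLt
        omega
  | succ m ih =>
    intro F hF
    have e0 : ∀ h : (0:ℕ) < m + 2, (⟨0, h⟩ : Fin (m + 2)) = 0 := fun _ => Fin.ext (by simp)
    have e0' : ∀ h : (0:ℕ) < m + 1, (⟨0, h⟩ : Fin (m + 1)) = 0 := fun _ => Fin.ext (by simp)
    have e1v : ((1 : Fin (m + 2)) : ℕ) = 1 := rfl
    have h01 : (0 : Fin (m + 2)) < 1 := by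
      rw [Fin.lt_def]; simp [e1v]
    rw [Finset.card_eq_sum_card_fiberwise
      (f := fun G : Fin (m + 2) → Finset (Fin n) => G 1)
      (t := 𝓕.filter (fun H => H ⊂ F ∧ onChain σ H))
      (by
        intro G hG
        rw [Finset.mem_coe, Finset.mem_filter] at hG
        obtain ⟨_, ⟨h1, h2, h3⟩, h4⟩ := hG
        rw [Finset.mem_coe, Finset.mem_filter]
        have hG0 : G 0 = F := by rw [← e0 (by omega)]; exact h1 (by omega)
        refine ⟨h2 1 (by rw [e1v]; omega), ?_, h4 1⟩
        rw [← hG0]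
        exact h3 0 1 h01)]
    have hfiber : ∀ H ∈ 𝓕.filter (fun H => H ⊂ F ∧ onChain σ H),
        ((Finset.univ.filter (fun G : Fin (m + 2) → Finset (Fin n) =>
          Valid 𝓕 F G ∧ ∀ i, onChain σ (G i))).filter (fun G => G 1 = H)).card
        = (Zcard 𝓕 H σ).choose m := by
      intro H hH
      rw [Finset.mem_filter] at hH
      obtain ⟨hH𝓕, hHF, hHon⟩ := hH
      rw [← ih H hHon]
      apply Finset.card_bij' (i := fun G _ => G ∘ Fin.succ)
        (j := fun G' _ => Fin.cons F G')
      · -- maps into the target filter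
        intro G hG
        rw [Finset.mem_filter, Finset.mem_filter] at hG
        obtain ⟨⟨_, ⟨h1, h2, h3⟩, h4⟩, h5⟩ := hG
        rw [Finset.mem_filter]
        refine ⟨Finset.mem_univ _, ⟨fun h => ?_, fun i hi => ?_, fun i j hij => ?_⟩,
          fun i => h4 _⟩
        · show G (Fin.succ ⟨0, h⟩) = H
          have : Fin.succ (⟨0, h⟩ : Fin (m + 1)) = 1 := Fin.ext (by simp [e1v])
          rw [this, h5]
        · exact h2 _ (by simp)
        · exact h3 _ _ (by simpa using hij)
      · -- the inverse maps into the source filter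
        intro G' hG'
        rw [Finset.mem_filter] at hG'
        obtain ⟨_, ⟨h1, h2, h3⟩, h4⟩ := hG'
        have hG'0 : G' 0 = H := by rw [← e0' (by omega)]; exact h1 (by omega)
        rw [Finset.mem_filter, Finset.mem_filter]
        have hsub : ∀ j : Fin (m + 1), Fin.cons (α := fun _ => Finset (Fin n)) F G' j.succ ⊂ F := by
          intro j
          rw [Fin.cons_succ]
          rcases eq_or_ne j 0 with rfl | hj0
          · rw [hG'0]; exact hHF
          · have : G' j ⊂ G' 0 := h3 0 j (Fin.pos_of_ne_zero hj0)
            rw [hG'0] at this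
            exact this.trans hHF
        refine ⟨⟨Finset.mem_univ _, ⟨fun h => ?_, fun i hi => ?_, fun i j hij => ?_⟩, fun i => ?_⟩, ?_⟩
        · rw [e0]; simp
        · -- membership in 𝓕
          rcases Fin.eq_zero_or_eq_succ i with rfl | ⟨j, rfl⟩
          · simp at hi
          · rw [Fin.cons_succ]
            rcases eq_or_ne j 0 with rfl | hj0
            · rw [hG'0]; exact hH𝓕
            · exact h2 j (fun hjv => hj0 (Fin.ext hjv))
        · -- decreasing
          rcases Fin.eq_zero_or_eq_succ j with rfl | ⟨j', rfl⟩
          · exact absurd hij (by rw [Fin.lt_def]; simp)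
          · rcases Fin.eq_zero_or_eq_succ i with rfl | ⟨i', rfl⟩
            · rw [Fin.cons_zero]
              exact hsub j'
            · rw [Fin.cons_succ, Fin.cons_succ]
              exact h3 i' j' (by simpa using hij)
        · -- onChain
          rcases Fin.eq_zero_or_eq_succ i with rfl | ⟨j, rfl⟩
          · rw [Fin.cons_zero]; exact hF
          · rw [Fin.cons_succ]; exact h4 j
        · -- G 1 = H
          show Fin.cons (α := fun _ => Finset (Fin n)) F G' 1 = H
          have : (1 : Fin (m + 2)) = Fin.succ 0 := Fin.ext (by simp [e1v])
          rw [this, Fin.cons_succ, hG'0]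
      · -- left inverse
        intro G hG
        rw [Finset.mem_filter, Finset.mem_filter] at hG
        obtain ⟨⟨_, ⟨h1, _, _⟩, _⟩, _⟩ := hG
        have hG0 : G 0 = F := by rw [← e0 (by omega)]; exact h1 (by omega)
        show Fin.cons F (G ∘ Fin.succ) = G
        rw [← hG0]
        exact Fin.cons_self_tail G
      · -- right inverse
        intro G' _
        funext j
        simp
    rw [Finset.sum_congr rfl hfiber]
    exact hockey 𝓕 F σ m

lemma cnt_cast_sum {ℓ : ℕ} (G : Fin ℓ → Finset (Fin n)) :
    ((cnt G : ℕ) : ℝ) = ∑ σ : Equiv.Perm (Fin n), if (∀ i, onChain σ (G i)) then (1:ℝ) else 0 := by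
  rw [Finset.sum_boole]
  unfold cnt
  norm_num

/-- The master identity: chain density times the flag count through `F`. -/
lemma density_eq (𝓕 : Finset (Finset (Fin n))) (F : Finset (Fin n)) (m : ℕ) :
    chainDensity 𝓕 (m + 1) F * (cnt (fun _ : Fin 1 => F) : ℝ)
      = ∑ σ ∈ Finset.univ.filter (fun σ : Equiv.Perm (Fin n) => onChain σ F),
          (((Zcard 𝓕 F σ).choose m : ℕ) : ℝ) := by
  rw [chainDensity_eq_sum_valid, Finset.sum_mul]
  have step1 : ∀ G : Fin (m + 1) → Finset (Fin n),
      (if Valid 𝓕 F G then chainWeight G else 0) * (cnt (fun _ : Fin 1 => F) : ℝ)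
        = ∑ σ : Equiv.Perm (Fin n),
            if Valid 𝓕 F G ∧ (∀ i, onChain σ (G i)) then (1:ℝ) else 0 := by
    intro G
    by_cases h : Valid 𝓕 F G
    · rw [if_pos h, weight_cnt 𝓕 F m G h, cnt_cast_sum]
      apply Finset.sum_congr rfl
      intro σ _
      simp [h]
    · rw [if_neg h, zero_mul]
      symm
      apply Finset.sum_eq_zero
      intro σ _
      simp [h]
  rw [Finset.sum_congr rfl (fun G _ => step1 G)]
  rw [Finset.sum_comm]
  have step2 : ∀ σ : Equiv.Perm (Fin n),
      (∑ G : Fin (m + 1) → Finset (Fin n),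
        if Valid 𝓕 F G ∧ (∀ i, onChain σ (G i)) then (1:ℝ) else 0)
      = if onChain σ F then (((Zcard 𝓕 F σ).choose m : ℕ) : ℝ) else 0 := by
    intro σ
    rw [Finset.sum_boole]
    by_cases h : onChain σ F
    · rw [if_pos h, tuple_count 𝓕 σ m F h]
    · rw [if_neg h]
      norm_num
      intro G hv
      by_contra h4
      push_neg at h4
      obtain ⟨h1, _, _⟩ := hv
      apply h
      have : G ⟨0, by omega⟩ = F := h1 (by omega)
      rw [← this]
      exact h4 _
  rw [Finset.sum_congr rfl (fun σ _ => step2 σ)]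
  rw [Finset.sum_ite, Finset.sum_const_zero, add_zero]

lemma cnt_one_pos (F : Finset (Fin n)) : 0 < cnt (fun _ : Fin 1 => F) := by
  have helim : ∀ i : Fin 0, (Finset.univ : Finset (Fin n)) ⊆ (Fin.elim0 : Fin 0 → Finset (Fin n)) i :=
    fun i => i.elim0
  have hon : ∀ σ : Equiv.Perm (Fin n),
      (∀ i : Fin 0, onChain σ ((Fin.elim0 : Fin 0 → Finset (Fin n)) i)) →
      initSeg σ F.card ⊆ Finset.univ := fun σ _ => Finset.subset_univ _
  have h := cnt_snoc (Fin.elim0 : Fin 0 → Finset (Fin n)) Finset.univ helim F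
    (Finset.subset_univ F) hon
  have hsnoc : (Fin.snoc (Fin.elim0 : Fin 0 → Finset (Fin n)) F : Fin 1 → Finset (Fin n))
      = fun _ : Fin 1 => F := by
    funext i
    have : i = Fin.last 0 := Fin.ext (by have := i.isLt; simp only [Fin.val_last]; omega)
    rw [this, Fin.snoc_last]
  rw [hsnoc] at h
  have hzero : 0 < cnt (Fin.elim0 : Fin 0 → Finset (Fin n)) := by
    unfold cnt
    rw [Finset.filter_true_of_mem (fun σ _ => fun i => i.elim0)]
    rw [Finset.card_univ]
    exact Fintype.card_pos
  by_contra hc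
  push_neg at hc
  have hz : cnt (fun _ : Fin 1 => F) = 0 := by omega
  rw [hz, Nat.mul_zero] at h
  omega

lemma choose_mono_left (z : ℕ) : ∀ a b : ℕ, a ≤ b → b ≤ z / 2 → z.choose a ≤ z.choose b := by
  intro a b hab
  induction b with
  | zero =>
    intro _
    have : a = 0 := Nat.le_zero.mp hab
    rw [this]
  | succ b ihb =>
    intro hbz
    rcases Nat.lt_or_ge a (b + 1) with h | h
    · have h1 : z.choose a ≤ z.choose b := ihb (by omega) (by omega)
      have h2 : z.choose b ≤ z.choose (b + 1) :=
        Nat.choose_le_succ_of_lt_half_left (by omega)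
      omega
    · have : a = b + 1 := by omega
      rw [this]

lemma choose_le_two_pow (z i : ℕ) : z.choose i ≤ 2 ^ z := by
  rcases Nat.lt_or_ge z i with h | h
  · rw [Nat.choose_eq_zero_of_lt h]
    positivity
  · calc z.choose i ≤ ∑ j ∈ Finset.range (z + 1), z.choose j :=
        Finset.single_le_sum (fun _ _ => Nat.zero_le _) (Finset.mem_range.mpr (by omega))
      _ = 2 ^ z := Nat.sum_range_choose z

lemma key_binomial (z ℓ k : ℕ) (hℓ1 : 1 ≤ ℓ) (hℓk : ℓ < k) :
    z.choose (ℓ - 1) ≤ z.choose (k - 1) + 4 ^ k := by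
  rcases le_or_gt z (2 * k) with h | h
  · have h1 : z.choose (ℓ - 1) ≤ 2 ^ z := choose_le_two_pow z (ℓ - 1)
    have h2 : (2 : ℕ) ^ z ≤ 2 ^ (2 * k) := Nat.pow_le_pow_right (by norm_num) h
    have h3 : (2 : ℕ) ^ (2 * k) = 4 ^ k := by
      rw [pow_mul]
      norm_num
    omega
  · have : z.choose (ℓ - 1) ≤ z.choose (k - 1) := by
      apply choose_mono_left z (ℓ - 1) (k - 1) (by omega)
      have : 2 * k ≤ z := by omega
      omega
    exact le_trans this (Nat.le_add_right _ _)

end Statement12Aux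

/-- Chain densities are almost monotone: `c_ℓ(F) ≤ c_k(F) + 4^k` for `1 ≤ ℓ < k`. -/
theorem statement12 (n k : ℕ) (hk : 2 ≤ k) (𝓕 : Finset (Finset (Fin n)))
    (F : Finset (Fin n)) (hF : F ∈ 𝓕) (ℓ : ℕ) (hℓ1 : 1 ≤ ℓ) (hℓk : ℓ < k) :
    chainDensity 𝓕 ℓ F ≤ chainDensity 𝓕 k F + 4 ^ k := by
  classical
  obtain ⟨mℓ, rfl⟩ : ∃ m, ℓ = m + 1 := ⟨ℓ - 1, by omega⟩
  obtain ⟨mk, rfl⟩ : ∃ m, k = m + 1 := ⟨k - 1, by omega⟩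
  have hNpos : 0 < Statement12Aux.cnt (fun _ : Fin 1 => F) := Statement12Aux.cnt_one_pos F
  set S := Finset.univ.filter (fun σ : Equiv.Perm (Fin n) => Statement12Aux.onChain σ F)
    with hS
  have hNS : Statement12Aux.cnt (fun _ : Fin 1 => F) = S.card := by
    unfold Statement12Aux.cnt
    rw [hS]
    congr 1
    apply Finset.filter_congr
    intro σ _
    exact ⟨fun h => h 0, fun h i => h⟩
  have h1 := Statement12Aux.density_eq 𝓕 F mℓ
  have h2 := Statement12Aux.density_eq 𝓕 F mk
  rw [← hS] at h1 h2
  have hpoint : ∀ σ ∈ S, (((Statement12Aux.Zcard 𝓕 F σ).choose mℓ : ℕ) : ℝ)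
      ≤ (((Statement12Aux.Zcard 𝓕 F σ).choose mk : ℕ) : ℝ) + 4 ^ (mk + 1) := by
    intro σ _
    have hnat := Statement12Aux.key_binomial (Statement12Aux.Zcard 𝓕 F σ) (mℓ + 1) (mk + 1)
      (by omega) (by omega)
    simp only [Nat.add_sub_cancel] at hnat
    have hr := (Nat.cast_le (α := ℝ)).mpr hnat
    push_cast at hr ⊢
    linarith
  have hN' : (0 : ℝ) < (Statement12Aux.cnt (fun _ : Fin 1 => F) : ℝ) := by
    exact_mod_cast hNpos
  have hsum : chainDensity 𝓕 (mℓ + 1) F * (Statement12Aux.cnt (fun _ : Fin 1 => F) : ℝ)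
      ≤ chainDensity 𝓕 (mk + 1) F * (Statement12Aux.cnt (fun _ : Fin 1 => F) : ℝ)
        + 4 ^ (mk + 1) * (Statement12Aux.cnt (fun _ : Fin 1 => F) : ℝ) := by
    rw [h1, h2]
    have hle : ∑ σ ∈ S, (((Statement12Aux.Zcard 𝓕 F σ).choose mℓ : ℕ) : ℝ)
        ≤ ∑ σ ∈ S, ((((Statement12Aux.Zcard 𝓕 F σ).choose mk : ℕ) : ℝ) + 4 ^ (mk + 1)) :=
      Finset.sum_le_sum hpoint
    rw [Finset.sum_add_distrib, Finset.sum_const, nsmul_eq_mul] at hle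
    have hcast : (Statement12Aux.cnt (fun _ : Fin 1 => F) : ℝ) = (S.card : ℝ) := by
      exact_mod_cast congrArg (Nat.cast (R := ℝ)) hNS
    rw [hcast]
    linarith
  have h3 : chainDensity 𝓕 (mℓ + 1) F * (Statement12Aux.cnt (fun _ : Fin 1 => F) : ℝ)
      ≤ (chainDensity 𝓕 (mk + 1) F + 4 ^ (mk + 1))
        * (Statement12Aux.cnt (fun _ : Fin 1 => F) : ℝ) := by
    rw [add_mul]
    linarith
  exact le_of_mul_le_mul_right h3 hN'
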